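/- Let D = (A,B,λ) be a temporal bi-clique with |A| = |B|. Then there exists a temporal clique C = (A ⊔ B, λ') such that for every spanner S of C, the set S ∩ (A⊗B) is a bi-spanner of D. -/

import Mathlib

/-!
Formalization framework for temporal graphs, temporal paths, spanners,
bi-spanners, and related notions from the paper on temporal spanners of
temporal cliques and bi-cliques.

A temporal graph on vertex type `V` is given by a labeling `lab : Sym2 V → L`
(only values on actual edges matter) together with an edge set
`E : Set (Sym2 V)`.  A temporal path is a nonempty list of vertices whose
consecutive pairs are edges of the allowed edge set and whose labels are
non-decreasing along the path (non-strict temporal path).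
-/

namespace TS

variable {V : Type} {L : Type} [LinearOrder L]

/-- The list of (undirected) edges traversed by a list of vertices. -/
def pathEdges (p : List V) : List (Sym2 V) :=
  (p.zip p.tail).map fun q => s(q.1, q.2)

/-- `p` is a temporal path using only edges from `S`, labelled by `lab`:
nonempty, all edges in `S`, labels non-decreasing along the path. -/
def IsTemporalPath (lab : Sym2 V → L) (S : Set (Sym2 V)) (p : List V) : Prop :=
  p ≠ [] ∧ (∀ e ∈ pathEdges p, e ∈ S) ∧
    (pathEdges p).Chain' fun e f => lab e ≤ lab f

/-- `u` reaches `v` via a temporal path contained in `S`. -/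
def Reaches (lab : Sym2 V → L) (S : Set (Sym2 V)) (u v : V) : Prop :=
  ∃ p : List V, p.head? = some u ∧ p.getLast? = some v ∧ IsTemporalPath lab S p

/-- Edge set of the complete graph on `V`. -/
def cliqueEdges (V : Type) : Set (Sym2 V) := {e | ¬ e.IsDiag}

/-- Edge set `A ⊗ B` of the complete bipartite graph with parts `α` and `β`. -/
def bicliqueEdges (α β : Type) : Set (Sym2 (α ⊕ β)) :=
  {e | ∃ a b, e = s(Sum.inl a, Sum.inr b)}

/-- `S` is a spanner of the temporal graph with edge set `E`:
`S ⊆ E` and every vertex reaches every other vertex within `S`. -/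
def IsSpanner (lab : Sym2 V → L) (E S : Set (Sym2 V)) : Prop :=
  S ⊆ E ∧ ∀ u v : V, Reaches lab S u v

/-- `S` is a bi-spanner of the temporal bi-clique with parts `α`, `β`:
`S ⊆ α ⊗ β` and every `a ∈ α` reaches every `b ∈ β` within `S`. -/
def IsBiSpanner {α β : Type} (lab : Sym2 (α ⊕ β) → L) (S : Set (Sym2 (α ⊕ β))) : Prop :=
  S ⊆ bicliqueEdges α β ∧ ∀ (a : α) (b : β), Reaches lab S (Sum.inl a) (Sum.inr b)

/-- `σ_cl n`: the minimum number `m` such that every temporal clique on `n`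
vertices admits a spanner with at most `m` edges. -/
noncomputable def sigmaCl (n : ℕ) : ℕ :=
  sInf {m | ∀ lab : Sym2 (Fin n) → ℕ, ∃ S : Finset (Sym2 (Fin n)),
    IsSpanner lab (cliqueEdges (Fin n)) (↑S) ∧ S.card ≤ m}

/-- `σ_bc n`: the minimum number `m` such that every temporal bi-clique with
`n` vertices on each side admits a bi-spanner with at most `m` edges. -/
noncomputable def sigmaBc (n : ℕ) : ℕ :=
  sInf {m | ∀ lab : Sym2 (Fin n ⊕ Fin n) → ℕ, ∃ S : Finset (Sym2 (Fin n ⊕ Fin n)),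
    IsBiSpanner lab (↑S) ∧ S.card ≤ m}

/-- `In(v,t)`: vertices reaching `v` via a temporal path (in edge set `E`)
all of whose labels are at most `t`. -/
def InSet (lab : Sym2 V → L) (E : Set (Sym2 V)) (v : V) (t : L) : Set V :=
  {u | ∃ p : List V, p.head? = some u ∧ p.getLast? = some v ∧
    IsTemporalPath lab E p ∧ ∀ e ∈ pathEdges p, lab e ≤ t}

/-- `Out(v,t)`: vertices that `v` reaches via a temporal path (in edge set `E`)
all of whose labels are at least `t`. -/
def OutSet (lab : Sym2 V → L) (E : Set (Sym2 V)) (v : V) (t : L) : Set V :=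
  {w | ∃ p : List V, p.head? = some v ∧ p.getLast? = some w ∧
    IsTemporalPath lab E p ∧ ∀ e ∈ pathEdges p, t ≤ lab e}

/-- `In(e)` for the edge `e = {u,v}`. -/
def InEdge (lab : Sym2 V → L) (E : Set (Sym2 V)) (u v : V) : Set V :=
  InSet lab E u (lab s(u, v)) ∪ InSet lab E v (lab s(u, v))

/-- `Out(e)` for the edge `e = {u,v}`. -/
def OutEdge (lab : Sym2 V → L) (E : Set (Sym2 V)) (u v : V) : Set V :=
  OutSet lab E u (lab s(u, v)) ∪ OutSet lab E v (lab s(u, v))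

variable {α β : Type}

/-- In a bi-clique, `b` is the earliest neighbor `π⁻(a)` of `a ∈ A`. -/
def IsEarliestNbrA (lab : Sym2 (α ⊕ β) → L) (a : α) (b : β) : Prop :=
  ∀ b' : β, lab s(Sum.inl a, Sum.inr b) ≤ lab s(Sum.inl a, Sum.inr b')

/-- In a bi-clique, `a` is the earliest neighbor `π⁻(b)` of `b ∈ B`. -/
def IsEarliestNbrB (lab : Sym2 (α ⊕ β) → L) (b : β) (a : α) : Prop :=
  ∀ a' : α, lab s(Sum.inl a, Sum.inr b) ≤ lab s(Sum.inl a', Sum.inr b)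

/-- In a bi-clique, `b` is the latest neighbor `π⁺(a)` of `a ∈ A`. -/
def IsLatestNbrA (lab : Sym2 (α ⊕ β) → L) (a : α) (b : β) : Prop :=
  ∀ b' : β, lab s(Sum.inl a, Sum.inr b') ≤ lab s(Sum.inl a, Sum.inr b)

/-- In a bi-clique, `a` is the latest neighbor `π⁺(b)` of `b ∈ B`. -/
def IsLatestNbrB (lab : Sym2 (α ⊕ β) → L) (b : β) (a : α) : Prop :=
  ∀ a' : α, lab s(Sum.inl a', Sum.inr b) ≤ lab s(Sum.inl a, Sum.inr b)

/-- The bi-clique is extremally matched: both the set `M⁻` of earliest edges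
and the set `M⁺` of latest edges form perfect matchings, i.e. the earliest-
(resp. latest-) neighbor maps of the two sides are mutually inverse. -/
def ExtremallyMatched (lab : Sym2 (α ⊕ β) → L) : Prop :=
  (∃ (f : α → β) (g : β → α),
    (∀ a, IsEarliestNbrA lab a (f a)) ∧ (∀ b, IsEarliestNbrB lab b (g b)) ∧
    (∀ a, g (f a) = a) ∧ (∀ b, f (g b) = b)) ∧
  (∃ (f : α → β) (g : β → α),
    (∀ a, IsLatestNbrA lab a (f a)) ∧ (∀ b, IsLatestNbrB lab b (g b)) ∧
    (∀ a, g (f a) = a) ∧ (∀ b, f (g b) = b))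

/-- `a ∈ A` is dismountable: there is `a' ≠ a` with
`λ({a, π⁻(a')}) ≤ λ({a', π⁻(a')})`. -/
def DismountableA (lab : Sym2 (α ⊕ β) → L) (a : α) : Prop :=
  ∃ (a' : α) (b : β), a' ≠ a ∧ IsEarliestNbrA lab a' b ∧
    lab s(Sum.inl a, Sum.inr b) ≤ lab s(Sum.inl a', Sum.inr b)

/-- `b ∈ B` is dismountable: there is `b' ≠ b` with
`λ({b', π⁺(b')}) ≤ λ({b, π⁺(b')})`. -/
def DismountableB (lab : Sym2 (α ⊕ β) → L) (b : β) : Prop :=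
  ∃ (b' : β) (a : α), b' ≠ b ∧ IsLatestNbrB lab b' a ∧
    lab s(Sum.inl a, Sum.inr b') ≤ lab s(Sum.inl a, Sum.inr b)

/-- The edge `{a', b'}` is `e`-reverted for `e = {a,b}`:
`λ({a', b}) ≤ λ({π⁺(b'), b})` or `λ({π⁻(a'), a}) ≤ λ({b', a})`. -/
def Reverted (lab : Sym2 (α ⊕ β) → L) (a : α) (b : β) (a' : α) (b' : β) : Prop :=
  (∃ a'' : α, IsLatestNbrB lab b' a'' ∧
    lab s(Sum.inl a', Sum.inr b) ≤ lab s(Sum.inl a'', Sum.inr b)) ∨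
  (∃ b'' : β, IsEarliestNbrA lab a' b'' ∧
    lab s(Sum.inl a, Sum.inr b'') ≤ lab s(Sum.inl a, Sum.inr b'))

/-- `M(e)`: the set of edges of the bi-clique that are *not* `e`-reverted,
for `e = {a,b}`. -/
def MSet (lab : Sym2 (α ⊕ β) → L) (a : α) (b : β) : Set (Sym2 (α ⊕ β)) :=
  {e | ∃ (a' : α) (b' : β), e = s(Sum.inl a', Sum.inr b') ∧ ¬ Reverted lab a b a' b'}

/-- `ind_{a}({a,b})`: the (1-based) rank of the edge `{a,b}` among the edges
incident to `a ∈ A`, ordered increasingly by label. -/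
def indA [Fintype β] (lab : Sym2 (α ⊕ β) → ℕ) (a : α) (b : β) : ℕ :=
  (Finset.univ.filter fun b' : β =>
    lab s(Sum.inl a, Sum.inr b') ≤ lab s(Sum.inl a, Sum.inr b)).card

/-- `ind_{b}({a,b})`: the (1-based) rank of the edge `{a,b}` among the edges
incident to `b ∈ B`, ordered increasingly by label. -/
def indB [Fintype α] (lab : Sym2 (α ⊕ β) → ℕ) (a : α) (b : β) : ℕ :=
  (Finset.univ.filter fun a' : α =>
    lab s(Sum.inl a', Sum.inr b) ≤ lab s(Sum.inl a, Sum.inr b)).card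

/-- Underlying symmetric label function of the shifted matching graph `SM_n`:
the edge `{a_i, b_j}` gets label `(j - i) mod n`. -/
def smFun (n : ℕ) : (Fin n ⊕ Fin n) → (Fin n ⊕ Fin n) → ℕ
  | Sum.inl i, Sum.inr j => (n + (j : ℕ) - (i : ℕ)) % n
  | Sum.inr j, Sum.inl i => (n + (j : ℕ) - (i : ℕ)) % n
  | _, _ => 0

theorem smFun_symm (n : ℕ) : ∀ x y, smFun n x y = smFun n y x := by
  rintro (i | i) (j | j) <;> rfl

/-- The labeling of the shifted matching graph `SM_n`. -/
def smLab (n : ℕ) : Sym2 (Fin n ⊕ Fin n) → ℕ :=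
  Sym2.lift ⟨smFun n, smFun_symm n⟩

end TS

namespace TS


section Stmt3Aux

variable {α β : Type}

/-- Auxiliary labeling function for the clique in statement 3. -/
def stmt3Fun (lab : Sym2 (α ⊕ β) → ℕ) (T : ℕ) : (α ⊕ β) → (α ⊕ β) → ℕ
  | Sum.inl _, Sum.inl _ => T
  | Sum.inr _, Sum.inr _ => 0
  | x, y => lab s(x, y) + 1

theorem stmt3Fun_symm (lab : Sym2 (α ⊕ β) → ℕ) (T : ℕ) :
    ∀ x y, stmt3Fun lab T x y = stmt3Fun lab T y x := by
  rintro (a | b) (a' | b') <;> simp [stmt3Fun, Sym2.eq_swap]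

/-- Auxiliary labeling of the clique in statement 3. -/
def stmt3Lab (lab : Sym2 (α ⊕ β) → ℕ) (T : ℕ) : Sym2 (α ⊕ β) → ℕ :=
  Sym2.lift ⟨stmt3Fun lab T, stmt3Fun_symm lab T⟩

@[simp] theorem stmt3Lab_mk (lab : Sym2 (α ⊕ β) → ℕ) (T : ℕ) (x y : α ⊕ β) :
    stmt3Lab lab T s(x, y) = stmt3Fun lab T x y := rfl

theorem pathEdges_cons_cons (x y : α ⊕ β) (l : List (α ⊕ β)) :
    pathEdges (x :: y :: l) = s(x, y) :: pathEdges (y :: l) := rfl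

/-- A temporal path from `A` to `B` contains at least one crossing edge. -/
theorem stmt3_aux1 : ∀ (p : List (α ⊕ β)) (a : α) (b : β),
    p.head? = some (Sum.inl a) → p.getLast? = some (Sum.inr b) →
    ∃ e ∈ pathEdges p, e ∈ bicliqueEdges α β
  | [], a, b => by simp
  | [x], a, b => by
      intro h1 h2
      simp at h1 h2
      subst h1; simp at h2
  | x :: y :: l, a, b => by
      intro h1 h2
      simp at h1
      subst h1
      rcases y with a' | b'
      · obtain ⟨e, he, hbe⟩ := stmt3_aux1 (Sum.inl a' :: l) a' b rfl
          (by rw [← h2]; simp [List.getLast?_cons_cons])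
        exact ⟨e, by rw [pathEdges_cons_cons]; exact List.mem_cons_of_mem _ he, hbe⟩
      · exact ⟨s(Sum.inl a, Sum.inr b'), by rw [pathEdges_cons_cons]; exact List.mem_cons_self,
          ⟨a, b', rfl⟩⟩

theorem chain_head_le (w : Sym2 (α ⊕ β) → ℕ) :
    ∀ (q : List (Sym2 (α ⊕ β))) (e₀ : Sym2 (α ⊕ β)),
      List.Chain' (fun e f => w e ≤ w f) (e₀ :: q) → ∀ e ∈ q, w e₀ ≤ w e
  | [], e₀ => by simp
  | f :: q, e₀ => by
      intro hc e he
      rw [List.Chain', List.isChain_cons_cons] at hc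
      rcases List.mem_cons.mp he with rfl | he'
      · exact hc.1
      · exact hc.1.trans (chain_head_le w q f hc.2 e he')

theorem tail_temporal {lab' : Sym2 (α ⊕ β) → ℕ} {S : Set (Sym2 (α ⊕ β))}
    {x y : α ⊕ β} {l : List (α ⊕ β)} (h : IsTemporalPath lab' S (x :: y :: l)) :
    IsTemporalPath lab' S (y :: l) := by
  obtain ⟨-, hS, hc⟩ := h
  rw [pathEdges_cons_cons] at hS hc
  exact ⟨by simp, fun e he => hS e (List.mem_cons_of_mem _ he), hc.tail⟩

theorem stmt3_key (lab : Sym2 (α ⊕ β) → ℕ) (T : ℕ)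
    (hT : ∀ (a : α) (b : β), lab s(Sum.inl a, Sum.inr b) + 1 < T)
    (S : Set (Sym2 (α ⊕ β))) :
    ∀ (p : List (α ⊕ β)) (b : β), IsTemporalPath (stmt3Lab lab T) S p →
      p.getLast? = some (Sum.inr b) →
      (∀ e ∈ pathEdges p, 1 ≤ stmt3Lab lab T e) →
      ∀ e ∈ pathEdges p, e ∈ bicliqueEdges α β
  | [], b => by simp [pathEdges]
  | [x], b => by simp [pathEdges]
  | x :: y :: l, b => by
      intro htp hlast hpos e he
      rw [pathEdges_cons_cons] at he
      have hlast' : (y :: l).getLast? = some (Sum.inr b) := by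
        rw [← hlast]; simp [List.getLast?_cons_cons]
      have hchain := htp.2.2
      rw [pathEdges_cons_cons] at hchain
      rcases x with a₀ | b₀ <;> rcases y with a₁ | b₁
      · -- A-A edge: impossible
        exfalso
        obtain ⟨f, hf, hbf⟩ := stmt3_aux1 (Sum.inl a₁ :: l) a₁ b rfl hlast'
        have h1 : stmt3Lab lab T s(Sum.inl a₀, Sum.inl a₁) ≤ stmt3Lab lab T f :=
          chain_head_le _ _ _ hchain f hf
        obtain ⟨a', b', rfl⟩ := hbf
        have := hT a' b'
        simp [stmt3Fun] at h1
        omega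
      · -- mixed
        rcases List.mem_cons.mp he with rfl | he'
        · exact ⟨a₀, b₁, rfl⟩
        · refine stmt3_key lab T hT S (Sum.inr b₁ :: l) b (tail_temporal htp) hlast' ?_ e he'
          intro f hf
          have h0 : (1 : ℕ) ≤ stmt3Lab lab T s(Sum.inl a₀, Sum.inr b₁) := by
            simp [stmt3Fun]
          exact h0.trans (chain_head_le _ _ _ hchain f hf)
      · -- mixed (reversed)
        rcases List.mem_cons.mp he with rfl | he'
        · exact ⟨a₁, b₀, Sym2.eq_swap⟩
        · refine stmt3_key lab T hT S (Sum.inl a₁ :: l) b (tail_temporal htp) hlast' ?_ e he'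
          intro f hf
          have h0 : (1 : ℕ) ≤ stmt3Lab lab T s(Sum.inr b₀, Sum.inl a₁) := by
            simp [stmt3Fun]
          exact h0.trans (chain_head_le _ _ _ hchain f hf)
      · -- B-B edge: label 0, contradicts positivity
        exfalso
        have := hpos s(Sum.inr b₀, Sum.inr b₁)
          (by rw [pathEdges_cons_cons]; exact List.mem_cons_self)
        simp [stmt3Fun] at this

theorem stmt3_chain_conv (lab : Sym2 (α ⊕ β) → ℕ) (T : ℕ) :
    ∀ q : List (Sym2 (α ⊕ β)), (∀ e ∈ q, e ∈ bicliqueEdges α β) →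
      List.Chain' (fun e f => stmt3Lab lab T e ≤ stmt3Lab lab T f) q →
      List.Chain' (fun e f => lab e ≤ lab f) q
  | [] => by simp [List.Chain']
  | [e] => by simp [List.Chain']
  | e :: f :: q => by
      intro hb hc
      rw [List.Chain', List.isChain_cons_cons] at hc ⊢
      refine ⟨?_, stmt3_chain_conv lab T (f :: q)
        (fun g hg => hb g (List.mem_cons_of_mem _ hg)) hc.2⟩
      obtain ⟨a, b, rfl⟩ := hb e (by simp)
      obtain ⟨a', b', rfl⟩ := hb f (by simp)
      have := hc.1
      simp [stmt3Fun] at this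
      omega

end Stmt3Aux

/-- for a temporal bi-clique `D = (A,B,λ)` with `|A| = |B|`,
there is a temporal clique `C` on `A ⊔ B` such that for every spanner `S`
of `C`, the set `S ∩ (A ⊗ B)` is a bi-spanner of `D`. -/
theorem stmt3 {α β : Type} [Fintype α] [Fintype β]
    (hcard : Fintype.card α = Fintype.card β) (lab : Sym2 (α ⊕ β) → ℕ) :
    ∃ lab' : Sym2 (α ⊕ β) → ℕ,
      ∀ S : Set (Sym2 (α ⊕ β)), IsSpanner lab' (cliqueEdges (α ⊕ β)) S →
        IsBiSpanner lab (S ∩ bicliqueEdges α β) := by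
  classical
  set M : ℕ := Finset.univ.sup (fun p : α × β => lab s(Sum.inl p.1, Sum.inr p.2)) with hM
  set T : ℕ := M + 2 with hTdef
  have hT : ∀ (a : α) (b : β), lab s(Sum.inl a, Sum.inr b) + 1 < T := by
    intro a b
    have : lab s(Sum.inl a, Sum.inr b) ≤ M :=
      Finset.le_sup (f := fun p : α × β => lab s(Sum.inl p.1, Sum.inr p.2))
        (Finset.mem_univ (a, b))
    omega
  refine ⟨stmt3Lab lab T, fun S hS => ⟨Set.inter_subset_right, fun a b => ?_⟩⟩
  obtain ⟨p, hhead, hlast, htp⟩ := hS.2 (Sum.inl a) (Sum.inr b)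
  -- first, all labels on the path are ≥ 1
  have hpos : ∀ e ∈ pathEdges p, 1 ≤ stmt3Lab lab T e := by
    match p, hhead with
    | [x], hhead =>
      exfalso
      simp at hhead hlast
      subst hhead; simp at hlast
    | x :: y :: l, hhead =>
      simp at hhead
      subst hhead
      have hlast' : (y :: l).getLast? = some (Sum.inr b) := by
        rw [← hlast]; simp [List.getLast?_cons_cons]
      have hchain := htp.2.2
      rw [pathEdges_cons_cons] at hchain
      rcases y with a₁ | b₁
      · exfalso
        obtain ⟨f, hf, hbf⟩ := stmt3_aux1 (Sum.inl a₁ :: l) a₁ b rfl hlast'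
        have h1 : stmt3Lab lab T s(Sum.inl a, Sum.inl a₁) ≤ stmt3Lab lab T f :=
          chain_head_le _ _ _ hchain f hf
        obtain ⟨a', b', rfl⟩ := hbf
        have := hT a' b'
        simp [stmt3Fun] at h1
        omega
      · intro e he
        rw [pathEdges_cons_cons] at he
        rcases List.mem_cons.mp he with rfl | he'
        · simp [stmt3Fun]
        · have h0 : (1 : ℕ) ≤ stmt3Lab lab T s(Sum.inl a, Sum.inr b₁) := by
            simp [stmt3Fun]
          exact h0.trans (chain_head_le _ _ _ hchain e he')
  have hbic : ∀ e ∈ pathEdges p, e ∈ bicliqueEdges α β :=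
    stmt3_key lab T hT S p b htp hlast hpos
  refine ⟨p, hhead, hlast, htp.1, fun e he => ⟨htp.2.1 e he, hbic e he⟩, ?_⟩
  exact stmt3_chain_conv lab T (pathEdges p) hbic htp.2.2


end TS
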